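/- If s(λ) solves (Aᵀ R⁻¹ A + λ² Q⁻¹) s = Aᵀ R⁻¹ d + λ² Q⁻¹ μ and x(λ) minimizes x ↦ (1/2)‖A Q x − b‖²_{R⁻¹} + (λ²/2)‖x‖²_Q with b = d − A μ, then s(λ) = μ + Q x(λ). -/

import Mathlib

open Matrix

private lemma quad_zero (a b : ℝ) (h : ∀ t : ℝ, 0 ≤ a * t^2 + b * t) : b = 0 := by
  by_contra hb
  have ha : (0:ℝ) < |a| + 1 := by positivity
  have h1 := h (-b / (|a| + 1))
  have hle := le_abs_self a
  have hb2 : 0 < b^2 := by positivity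
  have e : (a * (-b / (|a|+1))^2 + b * (-b / (|a|+1))) * (|a|+1)^2
      = a*b^2 - b^2*(|a|+1) := by
    field_simp; ring
  have h2 : 0 ≤ a*b^2 - b^2*(|a|+1) := e ▸ mul_nonneg h1 (by positivity)
  nlinarith [mul_le_mul_of_nonneg_right hle (sq_nonneg b)]

private lemma dot_transpose_mulVec {m n : ℕ} (M : Matrix (Fin m) (Fin n) ℝ)
    (u : Fin m → ℝ) (v : Fin n → ℝ) : v ⬝ᵥ (Mᵀ *ᵥ u) = (M *ᵥ v) ⬝ᵥ u := by
  rw [mulVec_transpose, dotProduct_comm, ← dotProduct_mulVec, dotProduct_comm]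

private lemma sym_dot {n : ℕ} {M : Matrix (Fin n) (Fin n) ℝ} (hM : Mᵀ = M)
    (u w : Fin n → ℝ) : u ⬝ᵥ (M *ᵥ w) = w ⬝ᵥ (M *ᵥ u) := by
  conv_lhs => rw [← hM]
  rw [dot_transpose_mulVec, dotProduct_comm]

private lemma posdef_mulVec_inj {n : ℕ} {M : Matrix (Fin n) (Fin n) ℝ} (hM : M.PosDef)
    {u w : Fin n → ℝ} (h : M *ᵥ u = M *ᵥ w) : u = w := by
  by_contra hne
  have h2 := hM.dotProduct_mulVec_pos (x := u - w) (sub_ne_zero.2 hne)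
  have h3 : M *ᵥ (u - w) = 0 := by rw [mulVec_sub, h, sub_self]
  rw [h3] at h2
  simp at h2

private lemma posdef_smul {n : ℕ} {M : Matrix (Fin n) (Fin n) ℝ} (hM : M.PosDef)
    {c : ℝ} (hc : 0 < c) : (c • M).PosDef := by
  refine Matrix.PosDef.of_dotProduct_mulVec_pos ?_ (fun v hv => ?_)
  · have h1 := hM.1
    unfold Matrix.IsHermitian at *
    rw [conjTranspose_smul, h1, star_trivial]
  · rw [smul_mulVec, dotProduct_smul, smul_eq_mul]
    exact mul_pos hc (hM.dotProduct_mulVec_pos hv)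

/-- If `s(λ)` solves the normal equations
`(Aᵀ R⁻¹ A + λ² Q⁻¹) s = Aᵀ R⁻¹ d + λ² Q⁻¹ μ` and `x(λ)` minimizes
`x ↦ (1/2)‖A Q x − b‖²_{R⁻¹} + (λ²/2)‖x‖²_Q` with `b = d − A μ`, then
`s(λ) = μ + Q x(λ)`. -/
theorem map_estimate_eq_mu_add_Q_x
    {m n : ℕ} (A : Matrix (Fin m) (Fin n) ℝ) (d : Fin m → ℝ) (μ : Fin n → ℝ)
    (l : ℝ) (hl : l ≠ 0)
    (R : Matrix (Fin m) (Fin m) ℝ) (hR : R.PosDef)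
    (Q : Matrix (Fin n) (Fin n) ℝ) (hQ : Q.PosDef)
    (s x : Fin n → ℝ) (b : Fin m → ℝ) (hb : b = d - A *ᵥ μ)
    (hs : (Aᵀ * R⁻¹ * A + l^2 • Q⁻¹) *ᵥ s = (Aᵀ * R⁻¹) *ᵥ d + l^2 • (Q⁻¹ *ᵥ μ))
    (hx : ∀ x' : Fin n → ℝ,
      (1/2) * (((A * Q) *ᵥ x - b) ⬝ᵥ (R⁻¹ *ᵥ ((A * Q) *ᵥ x - b)))
        + (l^2/2) * (x ⬝ᵥ (Q *ᵥ x))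
      ≤ (1/2) * (((A * Q) *ᵥ x' - b) ⬝ᵥ (R⁻¹ *ᵥ ((A * Q) *ᵥ x' - b)))
        + (l^2/2) * (x' ⬝ᵥ (Q *ᵥ x'))) :
    s = μ + Q *ᵥ x := by
  have hl2 : (0:ℝ) < l^2 := by positivity
  have hQsym : Qᵀ = Q := by
    have := hQ.isHermitian
    rwa [Matrix.IsHermitian, conjTranspose_eq_transpose_of_trivial] at this
  have hRi := hR.inv
  have hQi := hQ.inv
  have hRisym : R⁻¹ᵀ = R⁻¹ := by
    have := hRi.isHermitian
    rwa [Matrix.IsHermitian, conjTranspose_eq_transpose_of_trivial] at this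
  have hQdet : IsUnit Q.det := isUnit_iff_ne_zero.2 hQ.det_pos.ne'
  have hQinv : Q⁻¹ * Q = 1 := nonsing_inv_mul Q hQdet
  set E := (A * Q) *ᵥ x - b with hE
  -- gradient vanishes in every direction
  have grad : ∀ v : Fin n → ℝ, v ⬝ᵥ ((A * Q)ᵀ *ᵥ (R⁻¹ *ᵥ E) + l^2 • (Q *ᵥ x)) = 0 := by
    intro v
    set W := (A * Q) *ᵥ v with hW
    apply quad_zero ((1/2) * (W ⬝ᵥ (R⁻¹ *ᵥ W)) + (l^2/2) * (v ⬝ᵥ (Q *ᵥ v)))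
    intro t
    have h := hx (x + t • v)
    have hvec : (A * Q) *ᵥ (x + t • v) - b = E + t • W := by
      rw [mulVec_add, mulVec_smul, hE]; abel
    rw [hvec] at h
    have e1 : (E + t • W) ⬝ᵥ (R⁻¹ *ᵥ (E + t • W))
        = E ⬝ᵥ (R⁻¹ *ᵥ E) + 2 * t * (W ⬝ᵥ (R⁻¹ *ᵥ E)) + t^2 * (W ⬝ᵥ (R⁻¹ *ᵥ W)) := by
      have hcross : E ⬝ᵥ (R⁻¹ *ᵥ W) = W ⬝ᵥ (R⁻¹ *ᵥ E) := sym_dot hRisym E W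
      simp only [mulVec_add, mulVec_smul, dotProduct_add, add_dotProduct,
        dotProduct_smul, smul_dotProduct, smul_eq_mul, hcross]
      ring
    have e2 : (x + t • v) ⬝ᵥ (Q *ᵥ (x + t • v))
        = x ⬝ᵥ (Q *ᵥ x) + 2 * t * (v ⬝ᵥ (Q *ᵥ x)) + t^2 * (v ⬝ᵥ (Q *ᵥ v)) := by
      have hcross : x ⬝ᵥ (Q *ᵥ v) = v ⬝ᵥ (Q *ᵥ x) := sym_dot hQsym x v
      simp only [mulVec_add, mulVec_smul, dotProduct_add, add_dotProduct,
        dotProduct_smul, smul_dotProduct, smul_eq_mul, hcross]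
      ring
    rw [e1, e2] at h
    have hlin : v ⬝ᵥ ((A * Q)ᵀ *ᵥ (R⁻¹ *ᵥ E) + l^2 • (Q *ᵥ x))
        = W ⬝ᵥ (R⁻¹ *ᵥ E) + l^2 * (v ⬝ᵥ (Q *ᵥ x)) := by
      rw [dotProduct_add, dot_transpose_mulVec, dotProduct_smul, smul_eq_mul, hW]
    rw [hlin]
    nlinarith [h]
  have g0 : (A * Q)ᵀ *ᵥ (R⁻¹ *ᵥ E) + l^2 • (Q *ᵥ x) = 0 := by
    funext i
    have := grad (Pi.single i 1)
    simpa using this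
  -- cancel a factor of Q on the left
  have g1 : Q *ᵥ (Aᵀ *ᵥ (R⁻¹ *ᵥ E) + l^2 • x) = Q *ᵥ 0 := by
    rw [mulVec_zero, mulVec_add, mulVec_smul, ← g0, transpose_mul, hQsym,
      ← mulVec_mulVec]
  have key : Aᵀ *ᵥ (R⁻¹ *ᵥ E) + l^2 • x = 0 := posdef_mulVec_inj hQ g1
  -- positive definiteness of the normal-equation matrix
  have hsemi : (Aᵀ * R⁻¹ * A).PosSemidef := by
    have := hRi.posSemidef.conjTranspose_mul_mul_same A
    simpa using this
  have hM : (Aᵀ * R⁻¹ * A + l^2 • Q⁻¹).PosDef := (posdef_smul hQi hl2).posSemidef_add hsemi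
  apply posdef_mulVec_inj hM
  rw [hs]
  have hQQ : Q⁻¹ *ᵥ (Q *ᵥ x) = x := by
    rw [mulVec_mulVec, hQinv, one_mulVec]
  have keyE : Aᵀ *ᵥ (R⁻¹ *ᵥ ((A * Q) *ᵥ x)) + l^2 • x
      = Aᵀ *ᵥ (R⁻¹ *ᵥ d) - Aᵀ *ᵥ (R⁻¹ *ᵥ (A *ᵥ μ)) := by
    have h' := key
    rw [hE, hb] at h'
    simp only [mulVec_sub] at h'
    linear_combination (norm := module) h'
  -- expand the left-hand side
  have expand : (Aᵀ * R⁻¹ * A + l^2 • Q⁻¹) *ᵥ (μ + Q *ᵥ x)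
      = Aᵀ *ᵥ (R⁻¹ *ᵥ (A *ᵥ μ)) + (Aᵀ *ᵥ (R⁻¹ *ᵥ ((A * Q) *ᵥ x)) + l^2 • x)
        + l^2 • (Q⁻¹ *ᵥ μ) := by
    rw [add_mulVec, smul_mulVec, mulVec_add, mulVec_add, hQQ, smul_add]
    simp only [← mulVec_mulVec, Matrix.mul_assoc]
    module
  rw [expand, keyE]
  simp only [← mulVec_mulVec]
  module
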